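/- arXiv:1206.0605 — 3 statements merged into one kernel-verified Lean document; each statement's English description precedes it below -/
import Mathlib

section
/- Let f : ℝ_+^N → ℝ^d be a function and t0 ∈ ℝ_+^N a point at which the local Hölder exponent satisfies α̃_f(t0) > 0. Then lim_{ρ→0} dim_H(Rg_f(B(t0,ρ))) ≤ lim_{ρ→0} dim_H(Gr_f(B(t0,ρ))) ≤ min{N/α̃_f(t0), N + d(1 − α̃_f(t0))}. -/
open MeasureTheory ProbabilityTheory Filter Set Metric
open scoped ENNReal NNReal Topology symmDiff

noncomputable section

variable {Ω : Type*} [MeasurableSpace Ω]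

/-- The ball of radius `ρ` around `t0`, taken within the domain `D`. -/
def ballIn {T : Type*} [PseudoMetricSpace T] (D : Set T) (t0 : T) (ρ : ℝ) : Set T :=
  D ∩ Metric.ball t0 ρ

/-- The incremental variance `E[|X_t - X_s|²]` of a real-valued process. -/
def incVar {T : Type*} (P : Measure Ω) (X : Ω → T → ℝ) (s t : T) : ℝ :=
  ∫ ω, (X ω t - X ω s) ^ 2 ∂P

/-- Deterministic local Hölder exponent at `t0` (within the domain `D`) of a process with
incremental variance `V`:
`sup {α > 0 : lim_{ρ→0} sup_{s,t ∈ B(t0,ρ)} V s t / dist s t ^ (2α) < ∞}`.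
Since the supremum is monotone in `ρ`, the finiteness of the limit is expressed as the
existence of some `ρ > 0` and a constant `C` bounding the ratio on `B(t0,ρ)`. -/
def detHolder {T : Type*} [PseudoMetricSpace T] (V : T → T → ℝ) (D : Set T) (t0 : T) : ℝ :=
  sSup {α : ℝ | 0 < α ∧ ∃ C : ℝ, ∃ ρ > (0:ℝ),
    ∀ s ∈ ballIn D t0 ρ, ∀ t ∈ ballIn D t0 ρ, V s t ≤ C * dist s t ^ (2 * α)}

/-- Deterministic local sub-exponent at `t0` (within the domain `D`) of a process with
incremental variance `V`:
`inf {α > 0 : lim_{ρ→0} inf_{s,t ∈ B(t0,ρ)} V s t / dist s t ^ (2α) = +∞}`.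
Since the infimum is monotone in `ρ`, the limit being `+∞` is expressed as: for every `M`
there is `ρ > 0` with `V s t ≥ M * dist s t ^ (2α)` on `B(t0,ρ)`. -/
def detSub {T : Type*} [PseudoMetricSpace T] (V : T → T → ℝ) (D : Set T) (t0 : T) : ℝ :=
  sInf {α : ℝ | 0 < α ∧ ∀ M : ℝ, ∃ ρ > (0:ℝ),
    ∀ s ∈ ballIn D t0 ρ, ∀ t ∈ ballIn D t0 ρ, M * dist s t ^ (2 * α) ≤ V s t}

/-- Pathwise local Hölder exponent of a function `f` at `t0`, within the domain `D`. -/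
def pathHolder {T F : Type*} [PseudoMetricSpace T] [NormedAddCommGroup F]
    (f : T → F) (D : Set T) (t0 : T) : ℝ :=
  sSup {α : ℝ | 0 < α ∧ ∃ C : ℝ, ∃ ρ > (0:ℝ),
    ∀ s ∈ ballIn D t0 ρ, ∀ t ∈ ballIn D t0 ρ, ‖f t - f s‖ ≤ C * dist s t ^ α}

/-- Pathwise local sub-exponent of a function `f` at `t0`, within the domain `D`. -/
def pathSub {T F : Type*} [PseudoMetricSpace T] [NormedAddCommGroup F]
    (f : T → F) (D : Set T) (t0 : T) : ℝ :=
  sInf {α : ℝ | 0 < α ∧ ∀ M : ℝ, ∃ ρ > (0:ℝ),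
    ∀ s ∈ ballIn D t0 ρ, ∀ t ∈ ballIn D t0 ρ, M * dist s t ^ α ≤ ‖f t - f s‖}

/-- A real-valued process indexed by `D ⊆ T` is Gaussian if every finite linear combination of
its values at points of `D` is a (possibly degenerate) Gaussian random variable. -/
def IsGaussianProcessOn {T : Type*} (P : Measure Ω) (D : Set T) (X : Ω → T → ℝ) : Prop :=
  ∀ (n : ℕ) (t : Fin n → T), (∀ k, t k ∈ D) → ∀ c : Fin n → ℝ,
    ∃ (m : ℝ) (σ : ℝ≥0), P.map (fun ω => ∑ k, c k * X ω (t k)) = gaussianReal m σ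

/-- The positive orthant `ℝ₊^N`. -/
def orth (N : ℕ) : Set (EuclideanSpace ℝ (Fin N)) := {t | ∀ i, 0 ≤ t i}

/-- A multiparameter Gaussian random field in `ℝ^d` indexed by `ℝ₊^N`: the coordinate
processes are Gaussian, independent, and identically distributed. -/
def IsGaussianField {N d : ℕ} (P : Measure Ω)
    (X : Ω → EuclideanSpace ℝ (Fin N) → EuclideanSpace ℝ (Fin d)) : Prop :=
  (∀ i : Fin d, IsGaussianProcessOn P (orth N) (fun ω t => X ω t i)) ∧
  iIndepFun (fun (i : Fin d) ω => fun t => X ω t i) P ∧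
  (∀ i j : Fin d, IdentDistrib (fun ω => fun t => X ω t i) (fun ω => fun t => X ω t j) P P)

/-- `lim_{ρ→0} dim_H (Gr_f(B(t0,ρ)))`; the limit exists by monotonicity and equals the
infimum over `ρ > 0`. -/
def limGrDim {T F : Type*} [MetricSpace T] [MetricSpace F]
    (f : T → F) (D : Set T) (t0 : T) : ℝ≥0∞ :=
  ⨅ (ρ : ℝ) (_ : 0 < ρ), dimH (Set.graphOn f (ballIn D t0 ρ))

/-- `lim_{ρ→0} dim_H (Rg_f(B(t0,ρ)))`; the limit exists by monotonicity and equals the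
infimum over `ρ > 0`. -/
def limRgDim {T F : Type*} [MetricSpace T] [MetricSpace F]
    (f : T → F) (D : Set T) (t0 : T) : ℝ≥0∞ :=
  ⨅ (ρ : ℝ) (_ : 0 < ρ), dimH (f '' ballIn D t0 ρ)


-- coordinate bound
lemma coord_le {N : ℕ} (x y : EuclideanSpace ℝ (Fin N)) (i : Fin N) :
    |x i - y i| ≤ dist x y := by
  rw [EuclideanSpace.dist_eq]
  have h1 : |x i - y i| = Real.sqrt ((x i - y i)^2) := (Real.sqrt_sq_eq_abs _).symm
  rw [h1]
  apply Real.sqrt_le_sqrt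
  have := Finset.single_le_sum (f := fun j => dist (x j) (y j) ^ 2)
    (fun j _ => sq_nonneg _) (Finset.mem_univ i)
  simpa [Real.dist_eq] using this

lemma euclid_dist_le {n : ℕ} (x y : EuclideanSpace ℝ (Fin n)) (δ : ℝ) (hδ : 0 ≤ δ)
    (h : ∀ i, |x i - y i| ≤ δ) : dist x y ≤ Real.sqrt n * δ := by
  rw [EuclideanSpace.dist_eq]
  have : ∑ i, dist (x i) (y i) ^ 2 ≤ n * δ ^ 2 := by
    calc ∑ i, dist (x i) (y i) ^ 2 ≤ ∑ _i : Fin n, δ ^ 2 := by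
          apply Finset.sum_le_sum
          intro i _
          have := h i
          rw [Real.dist_eq]
          nlinarith [abs_nonneg (x i - y i), abs_sq (x i - y i)]
      _ = n * δ ^ 2 := by simp [mul_comm]
  calc Real.sqrt (∑ i, dist (x i) (y i) ^ 2) ≤ Real.sqrt (n * δ ^ 2) := Real.sqrt_le_sqrt this
    _ = Real.sqrt n * δ := by
        rw [Real.sqrt_mul (by positivity), Real.sqrt_sq hδ]

lemma mem_subint (a δ : ℝ) (hδ : 0 < δ) (m : ℕ) (hm : 0 < m) (x : ℝ)
    (hx : a ≤ x) (hx2 : x ≤ a + m * δ) :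
    ∃ k : Fin m, x ∈ Icc (a + k * δ) (a + (k + 1) * δ) := by
  set v := x - a with hv
  have hv0 : 0 ≤ v := by simp [hv]; linarith
  set k0 : ℕ := ⌊v / δ⌋₊ with hk0
  refine ⟨⟨min k0 (m - 1), ?_⟩, ?_, ?_⟩
  · have : m - 1 < m := Nat.sub_lt hm one_pos
    exact lt_of_le_of_lt (min_le_right _ _) this
  · have h1 : ((min k0 (m-1) : ℕ) : ℝ) ≤ (k0 : ℝ) := by exact_mod_cast min_le_left _ _
    have h2 : (k0 : ℝ) ≤ v / δ := Nat.floor_le (by positivity)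
    have : ((min k0 (m-1) : ℕ) : ℝ) * δ ≤ v := by
      calc ((min k0 (m-1) : ℕ) : ℝ) * δ ≤ (v / δ) * δ := by
            apply mul_le_mul_of_nonneg_right (h1.trans h2) hδ.le
        _ = v := by field_simp
    simp only []
    linarith
  · show x ≤ a + (((min k0 (m-1) : ℕ) : ℝ) + 1) * δ
    rcases le_or_gt k0 (m - 1) with hc | hc
    · have hmin : min k0 (m-1) = k0 := min_eq_left hc
      have h2 : v / δ < k0 + 1 := Nat.lt_floor_add_one _
      have : v < ((k0:ℝ) + 1) * δ := by
        calc v = (v / δ) * δ := by field_simp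
          _ < ((k0:ℝ) + 1) * δ := by apply mul_lt_mul_of_pos_right h2 hδ
      rw [hmin]
      linarith
    · have hmin : min k0 (m-1) = m - 1 := min_eq_right hc.le
      have hm1 : ((m - 1 : ℕ) : ℝ) + 1 = m := by
        have : (1:ℕ) ≤ m := hm
        push_cast [Nat.cast_sub this]
        ring
      rw [hmin, hm1]
      linarith

lemma convex_orthBall {N : ℕ} (t0 : EuclideanSpace ℝ (Fin N)) (ρ : ℝ) :
    Convex ℝ ({t | ∀ i, 0 ≤ t i} ∩ Metric.ball t0 ρ) := by
  apply Convex.inter _ (convex_ball t0 ρ)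
  intro s hs t ht a b ha hb hab
  intro i
  have : (a • s + b • t) i = a * s i + b * t i := rfl
  rw [this]
  have := hs i
  have := ht i
  positivity

lemma const_of_holder {T F : Type*} [NormedAddCommGroup T] [NormedSpace ℝ T]
    [NormedAddCommGroup F] {f : T → F} {B : Set T} (hB : Convex ℝ B) {C α : ℝ}
    (hα : 1 < α) (H : ∀ s ∈ B, ∀ t ∈ B, ‖f t - f s‖ ≤ C * dist s t ^ α)
    {s t : T} (hs : s ∈ B) (ht : t ∈ B) : f t = f s := by
  set D := dist s t with hD
  have key : ∀ n : ℕ, ‖f t - f s‖ ≤ (C * D ^ α) * ((n:ℝ) + 1) ^ (1 - α) := by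
    intro n
    have hn1 : (0:ℝ) < (n:ℝ) + 1 := by positivity
    set p : ℕ → T := fun k => s + ((k:ℝ)/((n:ℝ)+1)) • (t - s) with hp
    have hpmem : ∀ k : ℕ, k ≤ n + 1 → p k ∈ B := by
      intro k hk
      have hk' : (k:ℝ) ≤ (n:ℝ) + 1 := by exact_mod_cast hk
      have hb0 : 0 ≤ (k:ℝ)/((n:ℝ)+1) := by positivity
      have hb1 : (k:ℝ)/((n:ℝ)+1) ≤ 1 := by rw [div_le_one hn1]; exact hk'
      have heq : p k = (1 - (k:ℝ)/((n:ℝ)+1)) • s + ((k:ℝ)/((n:ℝ)+1)) • t := by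
        simp only [hp]; module
      rw [heq]
      exact hB hs ht (by linarith) hb0 (by ring)
    have hp0 : p 0 = s := by simp [hp]
    have hpn : p (n + 1) = t := by
      have : ((n+1:ℕ):ℝ)/((n:ℝ)+1) = 1 := by push_cast; field_simp
      simp only [hp, this, one_smul]; abel
    have hdist : ∀ k : ℕ, dist (p k) (p (k+1)) = D / ((n:ℝ)+1) := by
      intro k
      have hsub : p (k+1) - p k = (1/((n:ℝ)+1)) • (t - s) := by
        have : ((k+1:ℕ):ℝ)/((n:ℝ)+1) = (k:ℝ)/((n:ℝ)+1) + 1/((n:ℝ)+1) := by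
          push_cast; ring
        simp only [hp, this]; module
      rw [dist_comm, dist_eq_norm, hsub, norm_smul, Real.norm_eq_abs,
        abs_of_pos (by positivity : (0:ℝ) < 1/((n:ℝ)+1)), ← dist_eq_norm t s,
        dist_comm t s, ← hD]
      ring
    have htel : f t - f s = ∑ k ∈ Finset.range (n+1), (f (p (k+1)) - f (p k)) := by
      rw [Finset.sum_range_sub (fun k => f (p k)) (n+1), hp0, hpn]
    calc ‖f t - f s‖ = ‖∑ k ∈ Finset.range (n+1), (f (p (k+1)) - f (p k))‖ := by rw [htel]
      _ ≤ ∑ k ∈ Finset.range (n+1), ‖f (p (k+1)) - f (p k)‖ := norm_sum_le _ _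
      _ ≤ ∑ _k ∈ Finset.range (n+1), C * (D/((n:ℝ)+1)) ^ α := by
          apply Finset.sum_le_sum
          intro k hk
          rw [Finset.mem_range] at hk
          have h1 := H (p k) (hpmem k (by omega)) (p (k+1)) (hpmem (k+1) (by omega))
          rwa [hdist k] at h1
      _ = ((n:ℝ)+1) * (C * (D/((n:ℝ)+1)) ^ α) := by
          rw [Finset.sum_const, Finset.card_range]; push_cast; ring
      _ = (C * D ^ α) * ((n:ℝ) + 1) ^ (1 - α) := by
          rw [Real.div_rpow dist_nonneg hn1.le, Real.rpow_sub hn1, Real.rpow_one]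
          field_simp
          ring
  have hlim : Tendsto (fun n : ℕ => (C * D ^ α) * ((n:ℝ) + 1) ^ (1 - α)) atTop (𝓝 0) := by
    have h1 : Tendsto (fun x : ℝ => x ^ (-(α - 1))) atTop (𝓝 0) :=
      tendsto_rpow_neg_atTop (by linarith)
    have h2 : Tendsto (fun n : ℕ => (n:ℝ) + 1) atTop atTop :=
      tendsto_atTop_add_const_right _ _ tendsto_natCast_atTop_atTop
    have h3 := h1.comp h2
    have h4 : (fun n : ℕ => ((n:ℝ) + 1) ^ (1 - α)) = (fun x : ℝ => x ^ (-(α - 1))) ∘ (fun n : ℕ => (n:ℝ) + 1) := by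
      funext n; simp only [Function.comp_apply]; congr 1; ring
    have h5 : Tendsto (fun n : ℕ => ((n:ℝ) + 1) ^ (1 - α)) atTop (𝓝 0) := by
      rw [h4]; exact h3
    simpa using h5.const_mul (C * D ^ α)
  have : ‖f t - f s‖ ≤ 0 := ge_of_tendsto' hlim key
  rw [← sub_eq_zero]
  exact norm_le_zero_iff.mp this

lemma pathHolder_props {T F : Type*} [NormedAddCommGroup T] [NormedSpace ℝ T]
    [NormedAddCommGroup F] (f : T → F) (D : Set T) (hD : Convex ℝ D) (t0 : T)
    (hpos : 0 < pathHolder f D t0) :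
    pathHolder f D t0 ≤ 1 ∧ ∀ β, 0 < β → β < pathHolder f D t0 →
      ∃ C ρ, 0 ≤ C ∧ 0 < ρ ∧ ρ ≤ 1/2 ∧
        ∀ s ∈ ballIn D t0 ρ, ∀ t ∈ ballIn D t0 ρ, ‖f t - f s‖ ≤ C * dist s t ^ β := by
  set S := {α : ℝ | 0 < α ∧ ∃ C : ℝ, ∃ ρ > (0:ℝ),
    ∀ s ∈ ballIn D t0 ρ, ∀ t ∈ ballIn D t0 ρ, ‖f t - f s‖ ≤ C * dist s t ^ α} with hS
  have hPH : pathHolder f D t0 = sSup S := rfl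
  have hne : S.Nonempty := by
    by_contra h
    rw [not_nonempty_iff_eq_empty] at h
    rw [hPH, h, Real.sSup_empty] at hpos
    exact lt_irrefl _ hpos
  have hbdd : BddAbove S := by
    by_contra h
    rw [hPH, Real.sSup_of_not_bddAbove h] at hpos
    exact lt_irrefl _ hpos
  constructor
  · by_contra h
    push_neg at h
    rw [hPH] at h
    obtain ⟨α', hα'S, hα'⟩ := exists_lt_of_lt_csSup hne h
    obtain ⟨hα'0, C, ρ, hρ, H⟩ := hα'S
    have hconv : Convex ℝ (ballIn D t0 ρ) := hD.inter (convex_ball t0 ρ)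
    have hconst : ∀ s ∈ ballIn D t0 ρ, ∀ t ∈ ballIn D t0 ρ, f t = f s :=
      fun s hs t ht => const_of_holder hconv hα' H hs ht
    apply (not_bddAbove_iff.mpr ?_) hbdd
    intro b
    refine ⟨max b 0 + 1, ⟨by positivity, 0, ρ, hρ, ?_⟩, by simp [lt_add_one, (le_max_left b 0).trans_lt]⟩
    · intro s hs t ht
      rw [hconst s hs t ht, sub_self, norm_zero, zero_mul]
  · intro β hβ0 hβα
    rw [hPH] at hβα
    obtain ⟨α', hα'S, hβα'⟩ := exists_lt_of_lt_csSup hne hβα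
    obtain ⟨hα'0, C, ρ, hρ, H⟩ := hα'S
    refine ⟨max C 0, min ρ (1/2), le_max_right _ _, by positivity, min_le_right _ _, ?_⟩
    intro s hs t ht
    have hsub : ballIn D t0 (min ρ (1/2)) ⊆ ballIn D t0 ρ :=
      inter_subset_inter_right _ (ball_subset_ball (min_le_left _ _))
    have h1 := H s (hsub hs) t (hsub ht)
    have hd1 : dist s t ≤ 1 := by
      have h2 : dist s t0 < min ρ (1/2) := hs.2
      have h3 : dist t t0 < min ρ (1/2) := ht.2
      have h4 : min ρ (1/2) ≤ 1/2 := min_le_right _ _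
      have := dist_triangle s t0 t
      rw [dist_comm t0 t] at this
      linarith
    rcases eq_or_lt_of_le (dist_nonneg (x := s) (y := t)) with h0 | h0
    · rw [← h0, Real.zero_rpow hα'0.ne'] at h1
      rw [← h0, Real.zero_rpow hβ0.ne', mul_zero]
      simpa using h1
    · have hexp : dist s t ^ α' ≤ dist s t ^ β :=
        Real.rpow_le_rpow_of_exponent_ge h0 hd1 hβα'.le
      calc ‖f t - f s‖ ≤ C * dist s t ^ α' := h1
        _ ≤ max C 0 * dist s t ^ α' :=
            mul_le_mul_of_nonneg_right (le_max_left C 0) (Real.rpow_nonneg dist_nonneg _)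
        _ ≤ max C 0 * dist s t ^ β :=
            mul_le_mul_of_nonneg_left hexp (le_max_right C 0)

lemma dimH_graph_le_div {N d : ℕ} (f : EuclideanSpace ℝ (Fin N) → EuclideanSpace ℝ (Fin d))
    (B : Set (EuclideanSpace ℝ (Fin N))) {C β : ℝ} (hC : 0 ≤ C) (hβ0 : 0 < β) (hβ1 : β ≤ 1)
    (hsmall : ∀ s ∈ B, ∀ t ∈ B, dist s t ≤ 1)
    (H : ∀ s ∈ B, ∀ t ∈ B, ‖f t - f s‖ ≤ C * dist s t ^ β) :
    dimH (Set.graphOn f B) ≤ (N : ℝ≥0∞) / ENNReal.ofReal β := by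
  set g : EuclideanSpace ℝ (Fin N) → EuclideanSpace ℝ (Fin N) × EuclideanSpace ℝ (Fin d) :=
    fun t => (t, f t) with hg
  have hgraph : Set.graphOn f B = g '' B := rfl
  set β' : ℝ≥0 := ⟨β, hβ0.le⟩ with hβ'
  set C' : ℝ≥0 := ⟨max C 1, by positivity⟩ with hC'
  have hhold : HolderOnWith C' β' g B := by
    intro x hx y hy
    have hdle : dist x y ≤ 1 := hsmall x hx y hy
    have hrle : dist x y ≤ dist x y ^ β := by
      rcases eq_or_lt_of_le (dist_nonneg (x := x) (y := y)) with h0 | h0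
      · rw [← h0, Real.zero_rpow hβ0.ne']
      · calc dist x y = dist x y ^ (1:ℝ) := (Real.rpow_one _).symm
          _ ≤ dist x y ^ β := Real.rpow_le_rpow_of_exponent_ge h0 hdle hβ1
    have hfb : dist (f x) (f y) ≤ C * dist x y ^ β := by
      rw [dist_eq_norm, norm_sub_rev]
      exact H x hx y hy
    have key : dist (g x) (g y) ≤ (max C 1) * dist x y ^ β := by
      rw [hg]
      rw [Prod.dist_eq]
      apply max_le
      · calc (dist x y : ℝ) ≤ dist x y ^ β := hrle
          _ = 1 * dist x y ^ β := (one_mul _).symm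
          _ ≤ max C 1 * dist x y ^ β :=
              mul_le_mul_of_nonneg_right (le_max_right C 1) (Real.rpow_nonneg dist_nonneg _)
      · calc dist (f x) (f y) ≤ C * dist x y ^ β := hfb
          _ ≤ max C 1 * dist x y ^ β :=
              mul_le_mul_of_nonneg_right (le_max_left C 1) (Real.rpow_nonneg dist_nonneg _)
    rw [edist_dist, edist_dist]
    calc ENNReal.ofReal (dist (g x) (g y)) ≤ ENNReal.ofReal ((max C 1) * dist x y ^ β) :=
          ENNReal.ofReal_le_ofReal key
      _ = (C' : ℝ≥0∞) * ENNReal.ofReal (dist x y) ^ (β' : ℝ) := by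
          rw [ENNReal.ofReal_mul (by positivity)]
          congr 1
          · rw [hC', ENNReal.ofReal]
            congr 1
            exact Real.toNNReal_of_nonneg (by positivity)
          · rw [← ENNReal.ofReal_rpow_of_nonneg dist_nonneg hβ0.le]
            rfl
  have hβpos : 0 < β' := hβ0
  have h1 : dimH (g '' B) ≤ dimH B / β' := hhold.dimH_image_le hβpos
  have h2 : dimH B ≤ (N : ℝ≥0∞) := by
    calc dimH B ≤ dimH (univ : Set (EuclideanSpace ℝ (Fin N))) := dimH_mono (subset_univ _)
      _ = N := by rw [Real.dimH_univ_eq_finrank]; simp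
  have h3 : (β' : ℝ≥0∞) = ENNReal.ofReal β := by
    rw [ENNReal.ofReal, hβ']
    congr 1
    exact (Real.toNNReal_of_nonneg hβ0.le).symm
  rw [hgraph]
  calc dimH (g '' B) ≤ dimH B / β' := h1
    _ ≤ (N : ℝ≥0∞) / β' := by gcongr
    _ = (N : ℝ≥0∞) / ENNReal.ofReal β := by rw [h3]

lemma abs_sub_le_of_Icc {a b x y : ℝ} (hx : x ∈ Icc a b) (hy : y ∈ Icc a b) :
    |x - y| ≤ b - a := by
  rw [abs_sub_le_iff]
  constructor <;> [skip; skip] <;> (obtain ⟨h1, h2⟩ := hx; obtain ⟨h3, h4⟩ := hy; linarith)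

lemma dimH_graph_le_box {N d : ℕ} (f : EuclideanSpace ℝ (Fin N) → EuclideanSpace ℝ (Fin d))
    (t0 : EuclideanSpace ℝ (Fin N)) {ρ C β : ℝ} (hρ : 0 < ρ) (hC : 0 ≤ C)
    (hβ0 : 0 < β) (hβ1 : β ≤ 1) (B : Set (EuclideanSpace ℝ (Fin N)))
    (hB : B ⊆ Metric.ball t0 ρ)
    (H : ∀ s ∈ B, ∀ t ∈ B, ‖f t - f s‖ ≤ C * dist s t ^ β) :
    dimH (Set.graphOn f B) ≤ ENNReal.ofReal ((N:ℝ) + d * (1 - β)) := by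
  rcases B.eq_empty_or_nonempty with rfl | ⟨t1, ht1⟩
  · rw [Set.graphOn_empty, dimH_empty]
    exact zero_le
  classical
  borelize (EuclideanSpace ℝ (Fin N) × EuclideanSpace ℝ (Fin d))
  set s : ℝ := (N:ℝ) + d * (1 - β) with hsdef
  have h1β : 0 ≤ 1 - β := by linarith
  have hs0 : (0:ℝ) ≤ s := add_nonneg (Nat.cast_nonneg N)
    (mul_nonneg (Nat.cast_nonneg d) h1β)
  -- mesh sizes
  set δ : ℕ → ℝ := fun n => ρ / (n + 1) with hδdef
  have hδpos : ∀ n, 0 < δ n := fun n => by positivity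
  set hgt : ℕ → ℝ := fun n => C * (Real.sqrt N * δ n) ^ β with hhgt
  have hgtnn : ∀ n, 0 ≤ hgt n := fun n => by
    apply mul_nonneg hC (Real.rpow_nonneg (by positivity) _)
  set m : ℕ → ℕ := fun n => ⌈2 * hgt n / δ n⌉₊ + 1 with hmdef
  have hmpos : ∀ n, 0 < m n := fun n => Nat.succ_pos _
  have hm2 : ∀ n, 2 * hgt n ≤ (m n : ℝ) * δ n := by
    intro n
    have h1 : 2 * hgt n / δ n ≤ (⌈2 * hgt n / δ n⌉₊ : ℝ) := Nat.le_ceil _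
    have h2 : ((⌈2 * hgt n / δ n⌉₊ : ℕ) : ℝ) ≤ (m n : ℝ) := by
      rw [hmdef]; push_cast; linarith
    have := (div_le_iff₀ (hδpos n)).mp (h1.trans h2)
    linarith
  -- cubes in the domain
  set Q : ∀ n : ℕ, (Fin N → Fin (2 * (n + 1))) → Set (EuclideanSpace ℝ (Fin N)) := fun n z =>
    {u | ∀ i, u i ∈ Icc (t0 i - ρ + (z i : ℝ) * δ n) (t0 i - ρ + ((z i : ℝ) + 1) * δ n)}
    with hQdef
  set pt : ∀ n : ℕ, (Fin N → Fin (2 * (n + 1))) → EuclideanSpace ℝ (Fin N) := fun n z =>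
    if hx : (Q n z ∩ B).Nonempty then hx.some else t1 with hptdef
  have hptB : ∀ n z, pt n z ∈ B := by
    intro n z
    rw [hptdef]
    dsimp only
    split_ifs with hx
    · exact hx.some_mem.2
    · exact ht1
  have hptQ : ∀ n z, (Q n z ∩ B).Nonempty → pt n z ∈ Q n z := by
    intro n z hx
    rw [hptdef]
    dsimp only
    rw [dif_pos hx]
    exact hx.some_mem.1
  -- covering sets
  set cov : ∀ n : ℕ, ((Fin N → Fin (2 * (n + 1))) × (Fin d → Fin (m n))) → Set (EuclideanSpace ℝ (Fin N) × EuclideanSpace ℝ (Fin d)) :=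
    fun n zw =>
      {p | (∀ i, p.1 i ∈ Icc (t0 i - ρ + (zw.1 i : ℝ) * δ n)
              (t0 i - ρ + ((zw.1 i : ℝ) + 1) * δ n)) ∧
           (∀ j, p.2 j ∈ Icc (f (pt n zw.1) j - hgt n + (zw.2 j : ℝ) * δ n)
              (f (pt n zw.1) j - hgt n + ((zw.2 j : ℝ) + 1) * δ n))} with hcovdef
  set r : ℕ → ℝ≥0∞ := fun n => ENNReal.ofReal (Real.sqrt ((N:ℝ) + d) * δ n) with hrdef
  have hδ0 : Tendsto δ atTop (𝓝 0) := by
    have h1 : Tendsto (fun n : ℕ => 1 / ((n:ℝ) + 1)) atTop (𝓝 0) :=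
      tendsto_one_div_add_atTop_nhds_zero_nat
    have h2 := h1.const_mul ρ
    simp only [mul_zero] at h2
    convert h2 using 2 with n
    rw [hδdef]
    ring
  have hr : Tendsto r atTop (𝓝 0) := by
    have h2 := hδ0.const_mul (Real.sqrt ((N:ℝ) + d))
    simp only [mul_zero] at h2
    have h3 := (ENNReal.continuous_ofReal.tendsto 0).comp h2
    simp only [ENNReal.ofReal_zero] at h3
    rw [hrdef]
    exact h3
  -- diameter bound
  have ht : ∀ n, ∀ i, EMetric.diam (cov n i) ≤ r n := by
    intro n zw
    apply EMetric.diam_le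
    intro p hp q hq
    rw [edist_dist]
    apply ENNReal.ofReal_le_ofReal
    rw [Prod.dist_eq]
    have hsq : Real.sqrt (N:ℝ) ≤ Real.sqrt ((N:ℝ) + d) :=
      Real.sqrt_le_sqrt (by push_cast; linarith [Nat.cast_nonneg (α := ℝ) d])
    have hsq2 : Real.sqrt (d:ℝ) ≤ Real.sqrt ((N:ℝ) + d) :=
      Real.sqrt_le_sqrt (by push_cast; linarith [Nat.cast_nonneg (α := ℝ) N])
    apply max_le
    · have h1 : dist p.1 q.1 ≤ Real.sqrt N * δ n := by
        apply euclid_dist_le _ _ _ (hδpos n).le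
        intro i
        have := abs_sub_le_of_Icc (hp.1 i) (hq.1 i)
        calc |p.1 i - q.1 i| ≤ (t0 i - ρ + ((zw.1 i : ℝ) + 1) * δ n) -
              (t0 i - ρ + (zw.1 i : ℝ) * δ n) := this
          _ = δ n := by ring
      calc dist p.1 q.1 ≤ Real.sqrt N * δ n := h1
        _ ≤ Real.sqrt ((N:ℝ) + d) * δ n := by
            apply mul_le_mul_of_nonneg_right hsq (hδpos n).le
    · have h1 : dist p.2 q.2 ≤ Real.sqrt d * δ n := by
        apply euclid_dist_le _ _ _ (hδpos n).le
        intro j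
        have := abs_sub_le_of_Icc (hp.2 j) (hq.2 j)
        calc |p.2 j - q.2 j| ≤ (f (pt n zw.1) j - hgt n + ((zw.2 j : ℝ) + 1) * δ n) -
              (f (pt n zw.1) j - hgt n + (zw.2 j : ℝ) * δ n) := this
          _ = δ n := by ring
      calc dist p.2 q.2 ≤ Real.sqrt d * δ n := h1
        _ ≤ Real.sqrt ((N:ℝ) + d) * δ n := by
            apply mul_le_mul_of_nonneg_right hsq2 (hδpos n).le
  -- covering property
  have hst : ∀ n, Set.graphOn f B ⊆ ⋃ i, cov n i := by
    intro n p hp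
    obtain ⟨u, hu, rfl⟩ := hp
    have h2ρ : ((2 * (n + 1) : ℕ) : ℝ) * δ n = 2 * ρ := by
      rw [hδdef]
      push_cast
      field_simp
    have hzs : ∀ i, ∃ k : Fin (2 * (n + 1)),
        u i ∈ Icc (t0 i - ρ + (k : ℝ) * δ n) (t0 i - ρ + ((k : ℝ) + 1) * δ n) := by
      intro i
      have hball := hB hu
      rw [mem_ball] at hball
      have hco := coord_le u t0 i
      have habs := abs_le.mp (hco.trans hball.le)
      apply mem_subint _ _ (hδpos n) _ (by positivity)
      · linarith [habs.1]
      · rw [h2ρ]; linarith [habs.2]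
    choose z hz using hzs
    have hne' : (Q n z ∩ B).Nonempty := ⟨u, fun i => hz i, hu⟩
    have hptz := hptQ n z hne'
    have hdupt : dist u (pt n z) ≤ Real.sqrt N * δ n := by
      apply euclid_dist_le _ _ _ (hδpos n).le
      intro i
      have h1 := abs_sub_le_of_Icc (hz i) (hptz i)
      calc |u i - pt n z i| ≤ (t0 i - ρ + ((z i : ℝ) + 1) * δ n) -
            (t0 i - ρ + (z i : ℝ) * δ n) := h1
        _ = δ n := by ring
    have hfb : ‖f u - f (pt n z)‖ ≤ hgt n := by
      calc ‖f u - f (pt n z)‖ ≤ C * dist (pt n z) u ^ β := H (pt n z) (hptB n z) u hu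
        _ ≤ C * (Real.sqrt N * δ n) ^ β := by
            apply mul_le_mul_of_nonneg_left _ hC
            apply Real.rpow_le_rpow dist_nonneg _ hβ0.le
            rw [dist_comm]
            exact hdupt
        _ = hgt n := rfl
    have hws : ∀ j, ∃ k : Fin (m n),
        f u j ∈ Icc (f (pt n z) j - hgt n + (k : ℝ) * δ n)
          (f (pt n z) j - hgt n + ((k : ℝ) + 1) * δ n) := by
      intro j
      have hco := coord_le (f u) (f (pt n z)) j
      rw [dist_eq_norm] at hco
      have habs := abs_le.mp (hco.trans hfb)
      apply mem_subint _ _ (hδpos n) _ (hmpos n)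
      · linarith [habs.1]
      · have := hm2 n
        linarith [habs.2]
    choose w hw using hws
    exact mem_iUnion.mpr ⟨(z, w), fun i => hz i, fun j => hw j⟩
  -- the measure bound
  have hμ := Measure.hausdorffMeasure_le_liminf_sum s (Set.graphOn f B) r hr cov
    (Eventually.of_forall ht) (Eventually.of_forall hst)
  set M : ℝ := 2 * C * (Real.sqrt N) ^ β + 2 with hMdef
  have hM0 : 0 ≤ M := by
    have : 0 ≤ 2 * C * (Real.sqrt N) ^ β :=
      mul_nonneg (by linarith) (Real.rpow_nonneg (Real.sqrt_nonneg _) _)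
    linarith
  set Kreal : ℝ := (2 * ρ) ^ N * M ^ d * (Real.sqrt ((N:ℝ) + d)) ^ s with hKdef
  have hKnn : 0 ≤ Kreal := by positivity
  have hev : ∀ᶠ n in atTop, ∑ i, EMetric.diam (cov n i) ^ s ≤ ENNReal.ofReal Kreal := by
    filter_upwards [eventually_ge_atTop ⌈ρ⌉₊] with n hn
    have hδ1 : δ n ≤ 1 := by
      rw [hδdef, div_le_one (by positivity)]
      calc ρ ≤ (⌈ρ⌉₊ : ℝ) := Nat.le_ceil ρ
        _ ≤ (n : ℝ) := by exact_mod_cast hn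
        _ ≤ (n : ℝ) + 1 := by linarith
    have hδp := hδpos n
    -- card bound
    have hsum : ∑ i, EMetric.diam (cov n i) ^ s ≤
        (Fintype.card ((Fin N → Fin (2 * (n + 1))) × (Fin d → Fin (m n))) : ℝ≥0∞) *
          (r n) ^ s := by
      calc ∑ i, EMetric.diam (cov n i) ^ s ≤ ∑ _i : ((Fin N → Fin (2 * (n + 1))) × (Fin d → Fin (m n))), (r n) ^ s := by
            apply Finset.sum_le_sum
            intro i _
            exact ENNReal.rpow_le_rpow (ht n i) hs0
        _ = (Fintype.card ((Fin N → Fin (2 * (n + 1))) × (Fin d → Fin (m n))) : ℝ≥0∞) * (r n) ^ s := by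
            rw [Finset.sum_const, Finset.card_univ, nsmul_eq_mul]
    have hcard : (Fintype.card ((Fin N → Fin (2 * (n + 1))) × (Fin d → Fin (m n))) : ℝ) =
        ((2 * (n + 1) : ℕ) : ℝ) ^ N * ((m n : ℕ) : ℝ) ^ d := by
      have hcardN : Fintype.card ((Fin N → Fin (2 * (n + 1))) × (Fin d → Fin (m n))) =
          (2 * (n + 1)) ^ N * (m n) ^ d := by
        simp [Fintype.card_fun]
      rw [hcardN]
      push_cast
      ring
    -- real inequality
    have hmle : (m n : ℝ) ≤ M * δ n ^ (β - 1) := by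
      have hceil : ((⌈2 * hgt n / δ n⌉₊ : ℕ) : ℝ) < 2 * hgt n / δ n + 1 :=
        Nat.ceil_lt_add_one (by positivity)
      have hmval : (m n : ℝ) ≤ 2 * hgt n / δ n + 2 := by
        rw [hmdef]; push_cast; linarith
      have hrw : 2 * hgt n / δ n = 2 * C * (Real.sqrt N) ^ β * δ n ^ (β - 1) := by
        rw [hhgt]
        dsimp only
        rw [Real.mul_rpow (Real.sqrt_nonneg _) hδp.le]
        rw [Real.rpow_sub_one hδp.ne']
        field_simp
      have hone : 1 ≤ δ n ^ (β - 1) :=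
        Real.one_le_rpow_of_pos_of_le_one_of_nonpos hδp hδ1 (by linarith)
      have h2C : 0 ≤ 2 * C * (Real.sqrt N) ^ β :=
        mul_nonneg (by linarith) (Real.rpow_nonneg (Real.sqrt_nonneg _) _)
      calc (m n : ℝ) ≤ 2 * hgt n / δ n + 2 := hmval
        _ = 2 * C * (Real.sqrt N) ^ β * δ n ^ (β - 1) + 2 := by rw [hrw]
        _ ≤ 2 * C * (Real.sqrt N) ^ β * δ n ^ (β - 1) + 2 * δ n ^ (β - 1) := by nlinarith
        _ = M * δ n ^ (β - 1) := by rw [hMdef]; ring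
    have hA : ((2 * (n + 1) : ℕ) : ℝ) = 2 * ρ / δ n := by
      rw [eq_div_iff hδp.ne']
      rw [hδdef]
      push_cast
      field_simp
    have hRI : ((2 * (n + 1) : ℕ) : ℝ) ^ N * ((m n : ℕ) : ℝ) ^ d *
        (Real.sqrt ((N:ℝ) + d) * δ n) ^ s ≤ Kreal := by
      have hXnn : (0:ℝ) ≤ (Real.sqrt ((N:ℝ) + d)) ^ s := Real.rpow_nonneg (Real.sqrt_nonneg _) _
      calc ((2 * (n + 1) : ℕ) : ℝ) ^ N * ((m n : ℕ) : ℝ) ^ d *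
            (Real.sqrt ((N:ℝ) + d) * δ n) ^ s
          = (2 * ρ / δ n) ^ N * ((m n : ℕ) : ℝ) ^ d *
            ((Real.sqrt ((N:ℝ) + d)) ^ s * δ n ^ s) := by
            rw [hA, Real.mul_rpow (Real.sqrt_nonneg _) hδp.le]
        _ ≤ (2 * ρ / δ n) ^ N * (M * δ n ^ (β - 1)) ^ d *
            ((Real.sqrt ((N:ℝ) + d)) ^ s * δ n ^ s) := by
            refine mul_le_mul_of_nonneg_right (mul_le_mul_of_nonneg_left ?_ (by positivity)) (by positivity)
            exact pow_le_pow_left₀ (Nat.cast_nonneg _) hmle d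
        _ = ((2 * ρ) ^ N * M ^ d * (Real.sqrt ((N:ℝ) + d)) ^ s) *
            ((δ n ^ ((β - 1) * (d:ℝ)) * δ n ^ s) / δ n ^ ((N:ℝ))) := by
            have hd1 : (δ n ^ (β - 1)) ^ d = δ n ^ ((β - 1) * (d:ℝ)) := by
              rw [← Real.rpow_natCast (δ n ^ (β - 1)) d, ← Real.rpow_mul hδp.le]
            have hd2 : (δ n) ^ N = δ n ^ ((N:ℝ)) := (Real.rpow_natCast _ _).symm
            rw [div_pow, mul_pow M (δ n ^ (β - 1)) d, hd1, hd2]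
            ring
        _ = Kreal := by
            rw [← Real.rpow_add hδp, ← Real.rpow_sub hδp]
            rw [show (β - 1) * (d:ℝ) + s - (N:ℝ) = 0 by rw [hsdef]; ring]
            rw [Real.rpow_zero, mul_one, hKdef]
    calc ∑ i, EMetric.diam (cov n i) ^ s
        ≤ (Fintype.card ((Fin N → Fin (2 * (n + 1))) × (Fin d → Fin (m n))) : ℝ≥0∞) *
          (r n) ^ s := hsum
      _ = ENNReal.ofReal (((2 * (n + 1) : ℕ) : ℝ) ^ N * ((m n : ℕ) : ℝ) ^ d *
          (Real.sqrt ((N:ℝ) + d) * δ n) ^ s) := by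
          rw [hrdef]
          dsimp only
          rw [ENNReal.ofReal_rpow_of_nonneg (by positivity) hs0]
          rw [← ENNReal.ofReal_natCast]
          rw [← ENNReal.ofReal_mul (by positivity)]
          rw [hcard]
      _ ≤ ENNReal.ofReal Kreal := ENNReal.ofReal_le_ofReal hRI
  have hμ2 : μH[s] (Set.graphOn f B) ≤ ENNReal.ofReal Kreal := by
    refine hμ.trans ?_
    calc liminf (fun n => ∑ i, EMetric.diam (cov n i) ^ s) atTop
        ≤ liminf (fun _ => ENNReal.ofReal Kreal) atTop := liminf_le_liminf hev
      _ = ENNReal.ofReal Kreal := liminf_const _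
  have hne : μH[((s.toNNReal : ℝ≥0) : ℝ)] (Set.graphOn f B) ≠ ⊤ := by
    rw [Real.coe_toNNReal s hs0]
    exact ne_top_of_le_ne_top ENNReal.ofReal_ne_top hμ2
  have := dimH_le_of_hausdorffMeasure_ne_top hne
  calc dimH (Set.graphOn f B) ≤ (s.toNNReal : ℝ≥0∞) := this
    _ = ENNReal.ofReal s := rfl

/-- Lemma 2.5 -/
theorem statement4 {N d : ℕ} (hN : 0 < N) (hd : 0 < d)
    (f : EuclideanSpace ℝ (Fin N) → EuclideanSpace ℝ (Fin d))
    (t0 : EuclideanSpace ℝ (Fin N)) (ht0 : t0 ∈ orth N)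
    (hpos : 0 < pathHolder f (orth N) t0) :
    limRgDim f (orth N) t0 ≤ limGrDim f (orth N) t0 ∧
    limGrDim f (orth N) t0 ≤
      min (ENNReal.ofReal (N / pathHolder f (orth N) t0))
        (ENNReal.ofReal (N + d * (1 - pathHolder f (orth N) t0))) := by
  constructor
  · rw [limRgDim, limGrDim]
    apply iInf_mono
    intro ρ
    apply iInf_mono
    intro _
    rw [← Set.image_snd_graphOn]
    exact LipschitzWith.prod_snd.dimH_image_le _
  · have hconv : Convex ℝ (orth N) := by
      intro s hs t ht a b ha hb hab
      intro i
      show 0 ≤ a * s i + b * t i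
      exact add_nonneg (mul_nonneg ha (hs i)) (mul_nonneg hb (ht i))
    set α := pathHolder f (orth N) t0 with hα
    obtain ⟨hα1, hdc⟩ := pathHolder_props f (orth N) hconv t0 hpos
    have key : ∀ β ∈ Ioo (0:ℝ) α,
        limGrDim f (orth N) t0 ≤ ENNReal.ofReal ((N:ℝ)/β) ∧
        limGrDim f (orth N) t0 ≤ ENNReal.ofReal ((N:ℝ) + d * (1 - β)) := by
      rintro β ⟨hβ0, hβα⟩
      obtain ⟨C, ρ, hC, hρ0, hρhalf, H⟩ := hdc β hβ0 hβα
      have hβ1 : β ≤ 1 := le_of_lt (lt_of_lt_of_le hβα hα1)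
      have hle : limGrDim f (orth N) t0 ≤ dimH (Set.graphOn f (ballIn (orth N) t0 ρ)) := by
        rw [limGrDim]
        exact iInf₂_le ρ hρ0
      have hsmall : ∀ s ∈ ballIn (orth N) t0 ρ, ∀ t ∈ ballIn (orth N) t0 ρ, dist s t ≤ 1 := by
        intro s hs t ht
        have h2 : dist s t0 < ρ := hs.2
        have h3 : dist t t0 < ρ := ht.2
        have := dist_triangle s t0 t
        rw [dist_comm t0 t] at this
        linarith
      constructor
      · refine hle.trans ?_
        have := dimH_graph_le_div f (ballIn (orth N) t0 ρ) hC hβ0 hβ1 hsmall H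
        refine this.trans_eq ?_
        rw [ENNReal.ofReal_div_of_pos hβ0, ENNReal.ofReal_natCast]
      · refine hle.trans ?_
        exact dimH_graph_le_box f t0 hρ0 hC hβ0 hβ1 _ Set.inter_subset_right H
    apply le_min
    · have hcont : Filter.Tendsto (fun x : ℝ => ENNReal.ofReal ((N:ℝ)/x)) (𝓝[<] α)
          (𝓝 (ENNReal.ofReal ((N:ℝ)/α))) := by
        apply Filter.Tendsto.mono_left _ nhdsWithin_le_nhds
        apply (ENNReal.continuous_ofReal.tendsto _).comp
        exact tendsto_const_nhds.div tendsto_id hpos.ne'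
      apply ge_of_tendsto hcont
      filter_upwards [Ioo_mem_nhdsLT_of_mem (⟨hpos, le_rfl⟩ : α ∈ Ioc (0:ℝ) α)] with β hβ
      exact (key β hβ).1
    · have hcont : Filter.Tendsto (fun x : ℝ => ENNReal.ofReal ((N:ℝ) + d * (1 - x))) (𝓝[<] α)
          (𝓝 (ENNReal.ofReal ((N:ℝ) + d * (1 - α)))) := by
        apply Filter.Tendsto.mono_left _ nhdsWithin_le_nhds
        apply (ENNReal.continuous_ofReal.tendsto _).comp
        exact (tendsto_const_nhds.add ((tendsto_const_nhds.sub tendsto_id).const_mul _))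
      apply ge_of_tendsto hcont
      filter_upwards [Ioo_mem_nhdsLT_of_mem (⟨hpos, le_rfl⟩ : α ∈ Ioc (0:ℝ) α)] with β hβ
      exact (key β hβ).2

end
end

section
/- Let m be the Lebesgue measure on ℝ^N and let a ≺ b in ℝ_+^N∖{0} with all coordinates of a strictly positive. Then there exist constants m_{a,b} > 0 and M_{a,b} > 0 such that for all s, t ∈ [a,b] = ∏_{i=1}^N [a_i, b_i]: m_{a,b} · ‖t−s‖_1 ≤ m([0,s] △ [0,t]) ≤ M_{a,b} · ‖t−s‖_∞, where ‖x‖_1 = Σ_{i=1}^N |x_i| and ‖x‖_∞ = max_{1≤i≤N} |x_i|. -/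
open MeasureTheory ProbabilityTheory Filter Set Metric
open scoped ENNReal NNReal Topology symmDiff

noncomputable section

variable {Ω : Type*} [MeasurableSpace Ω]

/-- The rectangle `[0,s] = ∏ᵢ [0, sᵢ]`. -/
def box {N : ℕ} (s : EuclideanSpace ℝ (Fin N)) : Set (EuclideanSpace ℝ (Fin N)) :=
  {x | ∀ i, 0 ≤ x i ∧ x i ≤ s i}

lemma box_eq_pi {N : ℕ} (s : EuclideanSpace ℝ (Fin N)) :
    box s = ((MeasurableEquiv.toLp 2 (Fin N → ℝ)).symm) ⁻¹' (Set.univ.pi fun i => Set.Icc 0 (s i)) := by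
  ext x
  constructor
  · intro h i _
    exact h i
  · intro h i
    exact h i (Set.mem_univ i)

lemma measurableSet_box {N : ℕ} (s : EuclideanSpace ℝ (Fin N)) : MeasurableSet (box s) := by
  rw [box_eq_pi]
  exact ((MeasurableEquiv.toLp 2 (Fin N → ℝ)).symm).measurable
    (MeasurableSet.univ_pi fun i => measurableSet_Icc)

lemma volume_box {N : ℕ} (s : EuclideanSpace ℝ (Fin N)) (hs : ∀ i, 0 ≤ s i) :
    volume (box s) = ENNReal.ofReal (∏ i, s i) := by
  rw [box_eq_pi,
    (EuclideanSpace.volume_preserving_symm_measurableEquiv_toLp (Fin N)).measure_preimage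
      ((MeasurableSet.univ_pi fun i => measurableSet_Icc).nullMeasurableSet)]
  rw [volume_pi_pi]
  simp only [Real.volume_Icc, sub_zero]
  rw [ENNReal.ofReal_prod_of_nonneg (fun i _ => hs i)]


lemma aux_upper {ι : Type*} [DecidableEq ι] (B : ℝ) (hB : 1 ≤ B) (u : Finset ι) (f g : ι → ℝ)
    (h : ∀ i ∈ u, 0 ≤ g i ∧ g i ≤ f i ∧ f i ≤ B) :
    ∏ i ∈ u, f i - ∏ i ∈ u, g i ≤ (∑ i ∈ u, (f i - g i)) * B ^ u.card := by
  induction u using Finset.induction with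
  | empty => simp
  | @insert i u' hi ih =>
    have h' : ∀ j ∈ u', 0 ≤ g j ∧ g j ≤ f j ∧ f j ≤ B := fun j hj => h j (Finset.mem_insert_of_mem hj)
    obtain ⟨hg0, hgf, hfB⟩ := h i (Finset.mem_insert_self i u')
    have hf0 : ∀ j ∈ u', 0 ≤ f j := fun j hj => le_trans (h' j hj).1 (h' j hj).2.1
    have hPf_le : ∏ j ∈ u', f j ≤ B ^ u'.card := by
      rw [← Finset.prod_const]
      exact Finset.prod_le_prod hf0 (fun j hj => (h' j hj).2.2)
    have hPge : ∏ j ∈ u', g j ≤ ∏ j ∈ u', f j :=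
      Finset.prod_le_prod (fun j hj => (h' j hj).1) (fun j hj => (h' j hj).2.1)
    have hB0 : (0:ℝ) ≤ B := le_trans zero_le_one hB
    have hBp : (0:ℝ) ≤ B ^ u'.card := pow_nonneg hB0 _
    have hsum0 : 0 ≤ ∑ j ∈ u', (f j - g j) :=
      Finset.sum_nonneg fun j hj => sub_nonneg.2 (h' j hj).2.1
    rw [Finset.prod_insert hi, Finset.prod_insert hi, Finset.sum_insert hi, Finset.card_insert_of_notMem hi]
    have key : f i * ∏ j ∈ u', f j - g i * ∏ j ∈ u', g j
        = (f i - g i) * ∏ j ∈ u', f j + g i * (∏ j ∈ u', f j - ∏ j ∈ u', g j) := by ring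
    rw [key, pow_succ]
    have h1 : (f i - g i) * ∏ j ∈ u', f j ≤ (f i - g i) * (B ^ u'.card * B) := by
      apply mul_le_mul_of_nonneg_left _ (sub_nonneg.2 hgf)
      calc ∏ j ∈ u', f j ≤ B ^ u'.card := hPf_le
        _ ≤ B ^ u'.card * B := le_mul_of_one_le_right hBp hB
    have h2 : g i * (∏ j ∈ u', f j - ∏ j ∈ u', g j)
        ≤ B * ((∑ j ∈ u', (f j - g j)) * B ^ u'.card) := by
      apply mul_le_mul (le_trans hgf hfB) (ih h') (sub_nonneg.2 hPge) hB0
    nlinarith [h1, h2]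

lemma aux_lower {ι : Type*} [DecidableEq ι] (A : ℝ) (hA0 : 0 ≤ A) (hA1 : A ≤ 1)
    (u : Finset ι) (f g : ι → ℝ)
    (h : ∀ i ∈ u, A ≤ g i ∧ g i ≤ f i) :
    (∑ i ∈ u, (f i - g i)) * A ^ u.card ≤ ∏ i ∈ u, f i - ∏ i ∈ u, g i := by
  induction u using Finset.induction with
  | empty => simp
  | @insert i u' hi ih =>
    have h' : ∀ j ∈ u', A ≤ g j ∧ g j ≤ f j := fun j hj => h j (Finset.mem_insert_of_mem hj)
    obtain ⟨hAg, hgf⟩ := h i (Finset.mem_insert_self i u')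
    have hg0 : ∀ j ∈ u', 0 ≤ g j := fun j hj => le_trans hA0 (h' j hj).1
    have hPf_ge : A ^ u'.card ≤ ∏ j ∈ u', f j := by
      rw [← Finset.prod_const]
      exact Finset.prod_le_prod (fun _ _ => hA0)
        (fun j hj => le_trans (h' j hj).1 (h' j hj).2)
    have hPge : ∏ j ∈ u', g j ≤ ∏ j ∈ u', f j :=
      Finset.prod_le_prod hg0 (fun j hj => (h' j hj).2)
    have hAp : (0:ℝ) ≤ A ^ u'.card := pow_nonneg hA0 _
    have hpow : A ^ (u'.card + 1) ≤ A ^ u'.card := pow_le_pow_of_le_one hA0 hA1 (Nat.le_succ _)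
    have hsum0 : 0 ≤ ∑ j ∈ u', (f j - g j) :=
      Finset.sum_nonneg fun j hj => sub_nonneg.2 (h' j hj).2
    rw [Finset.prod_insert hi, Finset.prod_insert hi, Finset.sum_insert hi, Finset.card_insert_of_notMem hi]
    have key : f i * ∏ j ∈ u', f j - g i * ∏ j ∈ u', g j
        = (f i - g i) * ∏ j ∈ u', f j + g i * (∏ j ∈ u', f j - ∏ j ∈ u', g j) := by ring
    rw [key]
    have h1 : (f i - g i) * A ^ (u'.card + 1) ≤ (f i - g i) * ∏ j ∈ u', f j :=
      mul_le_mul_of_nonneg_left (le_trans hpow hPf_ge) (sub_nonneg.2 hgf)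
    have h2 : (∑ j ∈ u', (f j - g j)) * A ^ (u'.card + 1)
        ≤ g i * (∏ j ∈ u', f j - ∏ j ∈ u', g j) := by
      have : (∑ j ∈ u', (f j - g j)) * A ^ (u'.card + 1)
          = A * ((∑ j ∈ u', (f j - g j)) * A ^ u'.card) := by ring
      rw [this]
      apply mul_le_mul hAg (ih h') (by positivity) (le_trans hA0 hAg)
    nlinarith [h1, h2]

/-- Lemma 3.1: for `s, t` in a box `[a,b]` with positive coordinates,
`m_{a,b} ‖t−s‖₁ ≤ m([0,s] ∆ [0,t]) ≤ M_{a,b} ‖t−s‖_∞` where `m` is the Lebesgue measure. -/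
theorem statement10 {N : ℕ} (hN : 0 < N) (a b : EuclideanSpace ℝ (Fin N))
    (ha : ∀ i, 0 < a i) (hab : ∀ i, a i < b i) :
    ∃ m M : ℝ, 0 < m ∧ 0 < M ∧
      ∀ s t : EuclideanSpace ℝ (Fin N),
        (∀ i, a i ≤ s i ∧ s i ≤ b i) → (∀ i, a i ≤ t i ∧ t i ≤ b i) →
        ENNReal.ofReal (m * ∑ i, |t i - s i|) ≤ volume (box s ∆ box t) ∧
        volume (box s ∆ box t) ≤ ENNReal.ofReal (M * ⨆ i, |t i - s i|) := by
  have hne : (Finset.univ : Finset (Fin N)).Nonempty := ⟨⟨0, hN⟩, Finset.mem_univ _⟩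
  set A : ℝ := Finset.univ.inf' hne (fun i => min 1 (a i)) with hA
  set B : ℝ := Finset.univ.sup' hne (fun i => max 1 (b i)) with hB
  have hApos : 0 < A := by
    rw [hA, Finset.lt_inf'_iff]
    exact fun i _ => lt_min one_pos (ha i)
  have hA1 : A ≤ 1 := le_trans (Finset.inf'_le (fun j => min 1 (a j)) (Finset.mem_univ (⟨0, hN⟩ : Fin N))) (min_le_left _ _)
  have hAa : ∀ i, A ≤ a i := fun i =>
    le_trans (Finset.inf'_le (fun j => min 1 (a j)) (Finset.mem_univ i)) (min_le_right _ _)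
  have hB1 : 1 ≤ B := by
    refine le_trans (le_max_left 1 (b ⟨0, hN⟩)) ?_
    exact Finset.le_sup' (fun i => max 1 (b i)) (Finset.mem_univ (⟨0, hN⟩ : Fin N))
  have hbB : ∀ i, b i ≤ B := fun i =>
    le_trans (le_max_right 1 (b i)) (Finset.le_sup' (fun j => max 1 (b j)) (Finset.mem_univ i))
  refine ⟨A ^ N, N * B ^ N, pow_pos hApos N, by positivity, ?_⟩
  intro s t hs ht
  set g : EuclideanSpace ℝ (Fin N) := WithLp.toLp 2 (fun i => min (s i) (t i)) with hgdef
  have hAg : ∀ i, A ≤ g i := fun i => le_min (le_trans (hAa i) (hs i).1) (le_trans (hAa i) (ht i).1)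
  have hg0 : ∀ i, 0 ≤ g i := fun i => le_trans hApos.le (hAg i)
  have hs0 : ∀ i, 0 ≤ s i := fun i => le_trans (hg0 i) (min_le_left _ _)
  have ht0 : ∀ i, 0 ≤ t i := fun i => le_trans (hg0 i) (min_le_right _ _)
  have hgs : ∀ i, g i ≤ s i := fun i => min_le_left _ _
  have hgt : ∀ i, g i ≤ t i := fun i => min_le_right _ _
  have hsB : ∀ i, s i ≤ B := fun i => le_trans (hs i).2 (hbB i)
  have htB : ∀ i, t i ≤ B := fun i => le_trans (ht i).2 (hbB i)
  set Ps := ∏ i, s i with hPs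
  set Pt := ∏ i, t i with hPt
  set Pg := ∏ i, g i with hPg
  have hPgs : Pg ≤ Ps := Finset.prod_le_prod (fun i _ => hg0 i) (fun i _ => hgs i)
  have hPgt : Pg ≤ Pt := Finset.prod_le_prod (fun i _ => hg0 i) (fun i _ => hgt i)
  have hPg0 : 0 ≤ Pg := Finset.prod_nonneg fun i _ => hg0 i
  have hinter : box s ∩ box t = box g := by
    ext x
    simp only [box, mem_inter_iff, mem_setOf_eq, hgdef, PiLp.toLp_apply, le_min_iff]
    constructor
    · intro ⟨h1, h2⟩ i
      exact ⟨(h1 i).1, (h1 i).2, (h2 i).2⟩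
    · intro h
      exact ⟨fun i => ⟨(h i).1, (h i).2.1⟩, fun i => ⟨(h i).1, (h i).2.2⟩⟩
  have hsub_s : box g ⊆ box s := fun x hx i => ⟨(hx i).1, le_trans (hx i).2 (hgs i)⟩
  have hsub_t : box g ⊆ box t := fun x hx i => ⟨(hx i).1, le_trans (hx i).2 (hgt i)⟩
  have hvg : volume (box g) = ENNReal.ofReal Pg := volume_box g hg0
  have hveq : volume (box s ∆ box t) = ENNReal.ofReal ((Ps - Pg) + (Pt - Pg)) := by
    rw [Set.symmDiff_def]
    have hd1 : box s \ box t = box s \ box g := by rw [← hinter, Set.diff_self_inter]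
    have hd2 : box t \ box s = box t \ box g := by rw [← hinter, Set.diff_inter_self_eq_diff]
    have hdisj : Disjoint (box s \ box g) (box t \ box g) := by
      rw [Set.disjoint_left]
      rintro x ⟨hxs, hxg⟩ ⟨hxt, -⟩
      exact hxg (hinter ▸ Set.mem_inter hxs hxt)
    rw [hd1, hd2,
      measure_union hdisj ((measurableSet_box t).diff (measurableSet_box g)),
      measure_diff hsub_s (measurableSet_box g).nullMeasurableSet
        (by rw [hvg]; exact ENNReal.ofReal_ne_top),
      measure_diff hsub_t (measurableSet_box g).nullMeasurableSet
        (by rw [hvg]; exact ENNReal.ofReal_ne_top),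
      volume_box s hs0, volume_box t ht0, hvg,
      ← ENNReal.ofReal_sub _ hPg0, ← ENNReal.ofReal_sub _ hPg0,
      ← ENNReal.ofReal_add (by linarith) (by linarith)]
  have hsum_eq : ∑ i, (s i - g i) + ∑ i, (t i - g i) = ∑ i, |t i - s i| := by
    rw [← Finset.sum_add_distrib]
    refine Finset.sum_congr rfl fun i _ => ?_
    show s i - g i + (t i - g i) = |t i - s i|
    have hgi : g i = min (s i) (t i) := rfl
    rcases le_total (s i) (t i) with h | h
    · rw [hgi, min_eq_left h, abs_of_nonneg (by linarith)]
      ring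
    · rw [hgi, min_eq_right h, abs_of_nonpos (by linarith)]
      ring
  have hcard : (Finset.univ : Finset (Fin N)).card = N := by simp
  have hlow1 := aux_lower A hApos.le hA1 Finset.univ s g (fun i _ => ⟨hAg i, hgs i⟩)
  have hlow2 := aux_lower A hApos.le hA1 Finset.univ t g (fun i _ => ⟨hAg i, hgt i⟩)
  have hup1 := aux_upper B hB1 Finset.univ s g (fun i _ => ⟨hg0 i, hgs i, hsB i⟩)
  have hup2 := aux_upper B hB1 Finset.univ t g (fun i _ => ⟨hg0 i, hgt i, htB i⟩)
  rw [hcard] at hlow1 hlow2 hup1 hup2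
  constructor
  · rw [hveq]
    apply ENNReal.ofReal_le_ofReal
    calc A ^ N * ∑ i, |t i - s i|
        = (∑ i, (s i - g i)) * A ^ N + (∑ i, (t i - g i)) * A ^ N := by
          rw [← add_mul, hsum_eq]; ring
      _ ≤ (Ps - Pg) + (Pt - Pg) := add_le_add hlow1 hlow2
  · rw [hveq]
    apply ENNReal.ofReal_le_ofReal
    have hsup : ∀ j, |t j - s j| ≤ ⨆ i, |t i - s i| := fun j =>
      le_ciSup (f := fun i => |t i - s i|) (Set.Finite.bddAbove (Set.finite_range _)) j
    have hsum_sup : ∑ i, |t i - s i| ≤ (N : ℝ) * ⨆ i, |t i - s i| := by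
      calc ∑ i, |t i - s i| ≤ Finset.univ.card • ⨆ i, |t i - s i| :=
            Finset.sum_le_card_nsmul _ _ _ (fun i _ => hsup i)
        _ = (N : ℝ) * ⨆ i, |t i - s i| := by rw [hcard, nsmul_eq_mul]
    calc (Ps - Pg) + (Pt - Pg)
        ≤ (∑ i, (s i - g i)) * B ^ N + (∑ i, (t i - g i)) * B ^ N := add_le_add hup1 hup2
      _ = (∑ i, |t i - s i|) * B ^ N := by rw [← add_mul, hsum_eq]
      _ ≤ ((N : ℝ) * ⨆ i, |t i - s i|) * B ^ N := by
          exact mul_le_mul_of_nonneg_right hsum_sup (by positivity)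
      _ = N * B ^ N * ⨆ i, |t i - s i| := by ring

end
end

section
/- Let B^H = {B^H_t ; t ∈ ℝ_+^N} be a multiparameter fractional Brownian motion of index H ∈ (0, 1/2] with m the Lebesgue measure. Then at every t0 ∈ ℝ_+^N with strictly positive coordinates, the deterministic local Hölder exponent and the deterministic local sub-exponent of B^H both equal H: 𝔞̃_{B^H}(t0) = 𝔞_{B^H}(t0) = H. -/
open MeasureTheory ProbabilityTheory Filter Set Metric
open scoped ENNReal NNReal Topology symmDiff

noncomputable section

variable {Ω : Type*} [MeasurableSpace Ω]

/-- A multiparameter fractional Brownian motion of index `H` (with `m` the Lebesgue measure):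
a centered Gaussian process on `ℝ₊^N` with covariance
`E[B_s B_t] = ½ (m([0,s])^{2H} + m([0,t])^{2H} − m([0,s] ∆ [0,t])^{2H})`. -/
def IsMpfBm {Ω : Type*} [MeasurableSpace Ω] {N : ℕ} (P : MeasureTheory.Measure Ω) (H : ℝ)
    (B : Ω → EuclideanSpace ℝ (Fin N) → ℝ) : Prop :=
  IsGaussianProcessOn P (orth N) B ∧
  (∀ t ∈ orth N, ∫ ω, B ω t ∂P = 0) ∧
  (∀ t ∈ orth N, MeasureTheory.MemLp (fun ω => B ω t) 2 P) ∧
  (∀ s ∈ orth N, ∀ t ∈ orth N,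
    ∫ ω, B ω s * B ω t ∂P =
      (1/2) * ((MeasureTheory.volume (box s)).toReal ^ (2*H)
        + (MeasureTheory.volume (box t)).toReal ^ (2*H)
        - (MeasureTheory.volume (box s ∆ box t)).toReal ^ (2*H)))

section Helpers

variable {N : ℕ}

lemma euclid_vol_pi (f : Fin N → Set ℝ) (hf : ∀ i, MeasurableSet (f i)) :
    volume ({x : EuclideanSpace ℝ (Fin N) | ∀ i, x i ∈ f i}) = ∏ i, volume (f i) := by
  have h := (EuclideanSpace.volume_preserving_symm_measurableEquiv_toLp (Fin N))
  have he : {x : EuclideanSpace ℝ (Fin N) | ∀ i, x i ∈ f i}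
      = (MeasurableEquiv.toLp 2 (Fin N → ℝ)).symm ⁻¹' (Set.pi univ f) := by
    ext x; simp [Set.mem_pi]
  rw [he, h.measure_preimage (MeasurableSet.univ_pi hf).nullMeasurableSet, volume_pi_pi]

lemma euclid_coord_le (x y : EuclideanSpace ℝ (Fin N)) (i : Fin N) : |x i - y i| ≤ dist x y := by
  rw [EuclideanSpace.dist_eq]
  have h1 : |x i - y i| = Real.sqrt (dist (x i) (y i) ^ 2) := by
    rw [Real.sqrt_sq_eq_abs, Real.dist_eq, abs_abs]
  rw [h1]
  exact Real.sqrt_le_sqrt (Finset.single_le_sum (f := fun j => dist (x j) (y j) ^ 2)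
    (fun j _ => by positivity) (Finset.mem_univ i))

lemma box_symmDiff_bounds (hN : 0 < N) (t0 : EuclideanSpace ℝ (Fin N))
    (ht0 : ∀ i, 0 < t0 i) :
    ∃ ρ0 > (0:ℝ), ∃ c1 > (0:ℝ), ∃ c2 > (0:ℝ),
      ∀ s, (∀ i, 0 ≤ s i) → dist s t0 < ρ0 → ∀ t, (∀ i, 0 ≤ t i) → dist t t0 < ρ0 →
        c1 * dist s t ≤ (volume (box s ∆ box t)).toReal ∧
        (volume (box s ∆ box t)).toReal ≤ c2 * dist s t := by
  have hne : (Finset.univ : Finset (Fin N)).Nonempty := ⟨⟨0, hN⟩, Finset.mem_univ _⟩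
  have hsN : 0 < Real.sqrt N := Real.sqrt_pos.mpr (by exact_mod_cast hN)
  set m0 := Finset.univ.inf' hne t0 with hm0def
  have hm0 : 0 < m0 := (Finset.lt_inf'_iff hne).mpr fun i _ => ht0 i
  set ρ0 := m0 / 2 with hρ0def
  have hρ0 : 0 < ρ0 := by positivity
  set K := ‖t0‖ + ρ0 with hKdef
  have hK0 : 0 < K := by positivity
  refine ⟨ρ0, hρ0, ρ0 ^ (N-1) / Real.sqrt N, div_pos (pow_pos hρ0 _) hsN,
    N * K ^ (N-1), mul_pos (by exact_mod_cast hN) (pow_pos hK0 _), ?_⟩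
  intro s hs hsd t ht htd
  have hcoordK : ∀ (u : EuclideanSpace ℝ (Fin N)), dist u t0 < ρ0 →
      ∀ j, ρ0 ≤ u j ∧ u j ≤ K := by
    intro u hud j
    have h1 : |u j - t0 j| ≤ dist u t0 := euclid_coord_le u t0 j
    have h2 := abs_le.mp (h1.trans hud.le)
    have h3 : m0 ≤ t0 j := Finset.inf'_le _ (Finset.mem_univ j)
    have h4 : t0 j ≤ ‖t0‖ := by
      have h5 : |t0 j - (0 : EuclideanSpace ℝ (Fin N)) j| ≤ dist t0 0 :=
        euclid_coord_le t0 0 j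
      have h6 : (0 : EuclideanSpace ℝ (Fin N)) j = 0 := rfl
      rw [h6, sub_zero, dist_zero_right] at h5
      exact (le_abs_self _).trans h5
    constructor
    · linarith
    · linarith
  -- finiteness
  have hsub_big : box s ∆ box t ⊆ {x : EuclideanSpace ℝ (Fin N) | ∀ j, x j ∈ Icc (0:ℝ) K} := by
    intro x hx
    rcases Set.mem_symmDiff.mp hx with ⟨hx1, _⟩ | ⟨hx1, _⟩
    · exact fun j => ⟨(hx1 j).1, (hx1 j).2.trans ((hcoordK s hsd j).2)⟩
    · exact fun j => ⟨(hx1 j).1, (hx1 j).2.trans ((hcoordK t htd j).2)⟩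
  have hfin : volume (box s ∆ box t) ≠ ⊤ := by
    refine ne_top_of_le_ne_top ?_ (measure_mono hsub_big)
    rw [euclid_vol_pi _ (fun _ => measurableSet_Icc)]
    refine (ENNReal.prod_lt_top (fun i _ => ?_)).ne
    rw [Real.volume_Icc]
    exact ENNReal.ofReal_lt_top
  constructor
  · -- lower bound
    rcases eq_or_lt_of_le (dist_nonneg : (0:ℝ) ≤ dist s t) with h0 | h0
    · rw [← h0, mul_zero]; exact ENNReal.toReal_nonneg
    obtain ⟨i, -, hi⟩ := Finset.exists_max_image Finset.univ (fun j => |s j - t j|) hne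
    have hiabs : dist s t / Real.sqrt N ≤ |s i - t i| := by
      rw [div_le_iff₀ hsN]
      have hstep : dist s t ≤ Real.sqrt (N * |s i - t i| ^ 2) := by
        rw [EuclideanSpace.dist_eq]
        apply Real.sqrt_le_sqrt
        calc ∑ j, dist (s j) (t j) ^ 2
            ≤ ∑ _j : Fin N, |s i - t i| ^ 2 := Finset.sum_le_sum (fun j _ => by
              rw [Real.dist_eq]
              exact pow_le_pow_left₀ (abs_nonneg _) (hi j (Finset.mem_univ j)) 2)
          _ = N * |s i - t i| ^ 2 := by
              rw [Finset.sum_const, Finset.card_univ, Fintype.card_fin, nsmul_eq_mul]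
      refine hstep.trans (le_of_eq ?_)
      rw [Real.sqrt_mul (Nat.cast_nonneg N), Real.sqrt_sq_eq_abs, abs_abs, mul_comm]
    set R : Set (EuclideanSpace ℝ (Fin N)) := {x | ∀ j, x j ∈
      (if j = i then Ioc (min (s i) (t i)) (max (s i) (t i)) else Icc 0 (min (s j) (t j)))}
      with hRdef
    have hRsub : R ⊆ box s ∆ box t := by
      intro x hx
      have hxi := hx i
      rw [if_pos rfl] at hxi
      rcases le_total (s i) (t i) with hst | hst
      · refine Set.mem_symmDiff.mpr (Or.inr ⟨fun j => ?_, fun hc => ?_⟩)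
        · by_cases hj : j = i
          · subst hj
            rw [min_eq_left hst, max_eq_right hst] at hxi
            exact ⟨le_trans (hs j) hxi.1.le, hxi.2⟩
          · have hxj := hx j
            rw [if_neg hj] at hxj
            exact ⟨hxj.1, hxj.2.trans (min_le_right _ _)⟩
        · rw [min_eq_left hst] at hxi
          exact absurd (hc i).2 (not_le.mpr hxi.1)
      · refine Set.mem_symmDiff.mpr (Or.inl ⟨fun j => ?_, fun hc => ?_⟩)
        · by_cases hj : j = i
          · subst hj
            rw [min_eq_right hst, max_eq_left hst] at hxi
            exact ⟨le_trans (ht j) hxi.1.le, hxi.2⟩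
          · have hxj := hx j
            rw [if_neg hj] at hxj
            exact ⟨hxj.1, hxj.2.trans (min_le_left _ _)⟩
        · rw [min_eq_right hst] at hxi
          exact absurd (hc i).2 (not_le.mpr hxi.1)
    have hRvol : ENNReal.ofReal ((ρ0 ^ (N-1) / Real.sqrt N) * dist s t) ≤ volume R := by
      rw [hRdef, euclid_vol_pi _ (fun j => by
        by_cases hj : j = i
        · rw [if_pos hj]; exact measurableSet_Ioc
        · rw [if_neg hj]; exact measurableSet_Icc)]
      rw [← Finset.mul_prod_erase Finset.univ _ (Finset.mem_univ i), if_pos rfl]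
      have h1 : ENNReal.ofReal (dist s t / Real.sqrt N)
          ≤ volume (Ioc (min (s i) (t i)) (max (s i) (t i))) := by
        rw [Real.volume_Ioc]
        refine ENNReal.ofReal_le_ofReal ?_
        rw [max_sub_min_eq_abs]
        first
        | exact hiabs
        | (rw [abs_sub_comm]; exact hiabs)
      have h2 : ENNReal.ofReal (ρ0 ^ (N-1)) ≤
          ∏ j ∈ Finset.univ.erase i, volume
            (if j = i then Ioc (min (s i) (t i)) (max (s i) (t i))
             else Icc 0 (min (s j) (t j))) := by
        have hstep : ∀ j ∈ Finset.univ.erase i, ENNReal.ofReal ρ0 ≤ volume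
            (if j = i then Ioc (min (s i) (t i)) (max (s i) (t i))
             else Icc 0 (min (s j) (t j))) := by
          intro j hj
          rw [if_neg (Finset.ne_of_mem_erase hj), Real.volume_Icc]
          refine ENNReal.ofReal_le_ofReal ?_
          have hminb : ρ0 ≤ min (s j) (t j) :=
            le_min (hcoordK s hsd j).1 (hcoordK t htd j).1
          linarith
        refine le_trans (le_of_eq ?_) (Finset.prod_le_prod' hstep)
        rw [Finset.prod_const, Finset.card_erase_of_mem (Finset.mem_univ i),
          Finset.card_univ, Fintype.card_fin, ← ENNReal.ofReal_pow hρ0.le]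
      calc ENNReal.ofReal ((ρ0 ^ (N-1) / Real.sqrt N) * dist s t)
          = ENNReal.ofReal (dist s t / Real.sqrt N) * ENNReal.ofReal (ρ0 ^ (N-1)) := by
            rw [← ENNReal.ofReal_mul (by positivity)]
            congr 1
            ring
        _ ≤ _ := mul_le_mul' h1 h2
    exact (ENNReal.ofReal_le_iff_le_toReal hfin).mp (hRvol.trans (measure_mono hRsub))
  · -- upper bound
    set A : Fin N → Set (EuclideanSpace ℝ (Fin N)) := fun i =>
      {x | ∀ j, x j ∈ (if j = i then Icc (min (s j) (t j)) (max (s j) (t j))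
        else Icc 0 (max (s j) (t j)))} with hAdef
    have hsubA : box s ∆ box t ⊆ ⋃ i, A i := by
      intro x hx
      rcases Set.mem_symmDiff.mp hx with ⟨hx1, hx2⟩ | ⟨hx1, hx2⟩
      · have hex : ∃ i, ¬ (0 ≤ x i ∧ x i ≤ t i) := by
          by_contra hc
          push_neg at hc
          exact hx2 hc
        obtain ⟨i, hxi⟩ := hex
        have hti : t i < x i := by
          rcases not_and_or.mp hxi with h | h
          · exact absurd (hx1 i).1 h
          · exact not_le.mp h
        refine Set.mem_iUnion.mpr ⟨i, fun j => ?_⟩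
        by_cases hj : j = i
        · subst hj
          rw [if_pos rfl]
          exact ⟨(min_le_right _ _).trans hti.le, (hx1 j).2.trans (le_max_left _ _)⟩
        · rw [if_neg hj]
          exact ⟨(hx1 j).1, (hx1 j).2.trans (le_max_left _ _)⟩
      · have hex : ∃ i, ¬ (0 ≤ x i ∧ x i ≤ s i) := by
          by_contra hc
          push_neg at hc
          exact hx2 hc
        obtain ⟨i, hxi⟩ := hex
        have hsi : s i < x i := by
          rcases not_and_or.mp hxi with h | h
          · exact absurd (hx1 i).1 h
          · exact not_le.mp h
        refine Set.mem_iUnion.mpr ⟨i, fun j => ?_⟩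
        by_cases hj : j = i
        · subst hj
          rw [if_pos rfl]
          exact ⟨(min_le_left _ _).trans hsi.le, (hx1 j).2.trans (le_max_right _ _)⟩
        · rw [if_neg hj]
          exact ⟨(hx1 j).1, (hx1 j).2.trans (le_max_right _ _)⟩
    have hA : ∀ i, volume (A i) ≤ ENNReal.ofReal (dist s t * K ^ (N-1)) := by
      intro i
      rw [hAdef]
      rw [euclid_vol_pi _ (fun j => by
        by_cases hj : j = i
        · rw [if_pos hj]; exact measurableSet_Icc
        · rw [if_neg hj]; exact measurableSet_Icc)]
      rw [← Finset.mul_prod_erase Finset.univ _ (Finset.mem_univ i), if_pos rfl]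
      rw [ENNReal.ofReal_mul dist_nonneg]
      refine mul_le_mul' ?_ ?_
      · rw [Real.volume_Icc, max_sub_min_eq_abs]
        first
        | exact ENNReal.ofReal_le_ofReal (euclid_coord_le s t i)
        | (rw [abs_sub_comm]; exact ENNReal.ofReal_le_ofReal (euclid_coord_le s t i))
      · have hstep : ∀ j ∈ Finset.univ.erase i, volume
            (if j = i then Icc (min (s j) (t j)) (max (s j) (t j))
             else Icc 0 (max (s j) (t j))) ≤ ENNReal.ofReal K := by
          intro j hj
          rw [if_neg (Finset.ne_of_mem_erase hj), Real.volume_Icc]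
          refine ENNReal.ofReal_le_ofReal ?_
          have h1 := (hcoordK s hsd j).2
          have h2 := (hcoordK t htd j).2
          have h3 : max (s j) (t j) ≤ K := max_le h1 h2
          linarith
        refine le_trans (Finset.prod_le_prod' hstep) (le_of_eq ?_)
        rw [Finset.prod_const, Finset.card_erase_of_mem (Finset.mem_univ i),
          Finset.card_univ, Fintype.card_fin, ← ENNReal.ofReal_pow hK0.le]
    have hbound : volume (box s ∆ box t)
        ≤ ENNReal.ofReal ((N * K ^ (N-1)) * dist s t) := by
      refine (measure_mono hsubA).trans ((measure_iUnion_fintype_le _ _).trans ?_)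
      refine (Finset.sum_le_sum fun i _ => hA i).trans ?_
      rw [Finset.sum_const, Finset.card_univ, Fintype.card_fin, nsmul_eq_mul,
        ← ENNReal.ofReal_natCast N, ← ENNReal.ofReal_mul (Nat.cast_nonneg N)]
      exact ENNReal.ofReal_le_ofReal (le_of_eq (by ring))
    exact ENNReal.toReal_le_of_le_ofReal (by positivity) hbound

lemma incVar_eq {Ω : Type*} [MeasurableSpace Ω] (P : Measure Ω)
    (H : ℝ) (hH0 : 0 < H) (B : Ω → EuclideanSpace ℝ (Fin N) → ℝ) (hB : IsMpfBm P H B)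
    {s t : EuclideanSpace ℝ (Fin N)} (hs : s ∈ orth N) (ht : t ∈ orth N) :
    incVar P B s t = (volume (box s ∆ box t)).toReal ^ (2*H) := by
  obtain ⟨-, -, hL2, hcov⟩ := hB
  have hmul : ∀ u v : EuclideanSpace ℝ (Fin N), u ∈ orth N → v ∈ orth N →
      Integrable (fun ω => B ω u * B ω v) P := by
    intro u v hu hv
    have h : (fun ω => B ω u * B ω v)
        = fun ω => (1/2) * (((B ω u + B ω v) ^ 2 - (B ω u) ^ 2) - (B ω v) ^ 2) := by
      funext ω; ring
    rw [h]
    exact (((((hL2 u hu).add (hL2 v hv)).integrable_sq).sub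
      (hL2 u hu).integrable_sq).sub (hL2 v hv).integrable_sq).const_mul _
  have hexp : incVar P B s t = ∫ ω, B ω t * B ω t ∂P
      - 2 * ∫ ω, B ω s * B ω t ∂P + ∫ ω, B ω s * B ω s ∂P := by
    unfold incVar
    have h : (fun ω => (B ω t - B ω s) ^ 2)
        = fun ω => (B ω t * B ω t - 2 * (B ω s * B ω t)) + B ω s * B ω s := by
      funext ω; ring
    have h1 : Integrable (fun ω => B ω t * B ω t - 2 * (B ω s * B ω t)) P :=
      (hmul t t ht ht).sub ((hmul s t hs ht).const_mul 2)
    have h2 : Integrable (fun ω => 2 * (B ω s * B ω t)) P := (hmul s t hs ht).const_mul 2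
    rw [h, integral_add h1 (hmul s s hs hs), integral_sub (hmul t t ht ht) h2,
      integral_const_mul]
  have h0 : ∀ u : EuclideanSpace ℝ (Fin N),
      (volume (box u ∆ box u)).toReal ^ (2*H) = 0 := by
    intro u
    rw [symmDiff_self]
    have : (⊥ : Set (EuclideanSpace ℝ (Fin N))) = ∅ := rfl
    rw [this, measure_empty]
    simp only [ENNReal.toReal_zero]
    exact Real.zero_rpow (by positivity)
  rw [hexp, hcov t ht t ht, hcov s hs t ht, hcov s hs s hs, h0 t, h0 s]
  ring

end Helpers

/-- Lemma 3.2: the deterministic local Hölder exponent and sub-exponent of the multiparameter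
fractional Brownian motion of index `H ∈ (0, 1/2]` both equal `H`. -/
theorem statement11 {Ω : Type*} [MeasurableSpace Ω] (P : Measure Ω) [IsProbabilityMeasure P]
    {N : ℕ} (hN : 0 < N) (H : ℝ) (hH0 : 0 < H) (hH : H ≤ 1/2)
    (B : Ω → EuclideanSpace ℝ (Fin N) → ℝ) (hB : IsMpfBm P H B) :
    ∀ t0 : EuclideanSpace ℝ (Fin N), (∀ i, 0 < t0 i) →
      detHolder (incVar P B) (orth N) t0 = H ∧ detSub (incVar P B) (orth N) t0 = H := by
  intro t0 ht0
  have ht0' : t0 ∈ orth N := fun i => (ht0 i).le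
  obtain ⟨ρ0, hρ0, c1, hc1, c2, hc2, hbd⟩ := box_symmDiff_bounds hN t0 ht0
  set i0 : Fin N := ⟨0, hN⟩ with hi0
  -- perturbation points along the first coordinate
  have hpt : ∀ d : ℝ, 0 < d →
      (t0 + EuclideanSpace.single i0 d) ∈ orth N ∧
      dist t0 (t0 + EuclideanSpace.single i0 d) = d := by
    intro d hd
    constructor
    · intro i
      have happ : (t0 + EuclideanSpace.single i0 d) i
          = t0 i + (if i = i0 then d else 0) := by
        simp [EuclideanSpace.single_apply]
      rw [happ]
      by_cases hii : i = i0
      · rw [if_pos hii]; have := ht0 i; linarith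
      · rw [if_neg hii]; have := ht0 i; linarith
    · rw [dist_eq_norm]
      have hsub : t0 - (t0 + EuclideanSpace.single i0 d)
          = -(EuclideanSpace.single i0 d) := by abel
      rw [hsub, norm_neg, EuclideanSpace.norm_single, Real.norm_eq_abs, abs_of_pos hd]
  -- nonnegativity of incVar
  have hVnonneg : ∀ s ∈ orth N, ∀ t ∈ orth N, 0 ≤ incVar P B s t := by
    intro s hs t ht
    rw [incVar_eq P H hH0 B hB hs ht]
    exact Real.rpow_nonneg ENNReal.toReal_nonneg _
  constructor
  · -- detHolder = H
    have hSH : {α : ℝ | 0 < α ∧ ∃ C : ℝ, ∃ ρ > (0:ℝ),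
        ∀ s ∈ ballIn (orth N) t0 ρ, ∀ t ∈ ballIn (orth N) t0 ρ,
          incVar P B s t ≤ C * dist s t ^ (2 * α)} = Set.Ioc 0 H := by
      ext α
      simp only [Set.mem_setOf_eq, Set.mem_Ioc]
      constructor
      · rintro ⟨hα, C, ρ, hρ, hC⟩
        refine ⟨hα, ?_⟩
        by_contra hcon
        push_neg at hcon
        have hexpos : (0:ℝ) < 2 * (α - H) := by linarith
        have htend : Filter.Tendsto (fun d : ℝ => C * d ^ (2 * (α - H))) (𝓝[>] 0) (𝓝 0) := by
          have hc : ContinuousAt (fun d : ℝ => d ^ (2 * (α - H))) 0 :=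
            Real.continuousAt_rpow_const 0 _ (Or.inr hexpos.le)
          have h00 : (0:ℝ) ^ (2 * (α - H)) = 0 := Real.zero_rpow (ne_of_gt hexpos)
          have h1 : Filter.Tendsto (fun d : ℝ => d ^ (2 * (α - H))) (𝓝[>] (0:ℝ))
              (𝓝 ((0:ℝ) ^ (2 * (α - H)))) := hc.tendsto.mono_left nhdsWithin_le_nhds
          simpa [h00] using h1.const_mul C
        have hc1H : (0:ℝ) < c1 ^ (2 * H) := Real.rpow_pos_of_pos hc1 _
        have hev : ∀ᶠ d in 𝓝[>] (0:ℝ),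
            C * d ^ (2 * (α - H)) < c1 ^ (2 * H) := htend.eventually (gt_mem_nhds hc1H)
        have hev2 : ∀ᶠ d in 𝓝[>] (0:ℝ), d ∈ Set.Ioo 0 (min ρ ρ0) :=
          Ioo_mem_nhdsGT_of_mem ⟨le_refl 0, lt_min hρ hρ0⟩
        obtain ⟨d, hd1, hd2⟩ := (hev.and hev2).exists
        obtain ⟨hd0, hdlt⟩ := hd2
        set p := t0 + EuclideanSpace.single i0 d with hp
        obtain ⟨hpo, hpd⟩ := hpt d hd0
        have hball1 : t0 ∈ ballIn (orth N) t0 ρ :=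
          ⟨ht0', by rw [Metric.mem_ball, dist_self]; exact hρ⟩
        have hball2 : p ∈ ballIn (orth N) t0 ρ := by
          refine ⟨hpo, ?_⟩
          rw [Metric.mem_ball, dist_comm, hpd]
          exact hdlt.trans_le (min_le_left _ _)
        have hVlow : c1 ^ (2 * H) * d ^ (2 * H) ≤ incVar P B t0 p := by
          rw [incVar_eq P H hH0 B hB ht0' hpo]
          have h := (hbd t0 (fun i => (ht0 i).le) (by rwa [dist_self]) p (fun i => hpo i)
            (by rw [dist_comm, hpd]; exact hdlt.trans_le (min_le_right _ _))).1
          rw [hpd] at h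
          calc c1 ^ (2 * H) * d ^ (2 * H) = (c1 * d) ^ (2 * H) :=
                (Real.mul_rpow hc1.le hd0.le).symm
            _ ≤ (volume (box t0 ∆ box p)).toReal ^ (2 * H) :=
                Real.rpow_le_rpow (by positivity) h (by positivity)
        have hVup := hC t0 hball1 p hball2
        rw [hpd] at hVup
        have hsplit : d ^ (2 * α) = d ^ (2 * (α - H)) * d ^ (2 * H) := by
          rw [← Real.rpow_add hd0]
          congr 1
          ring
        have hdH : (0:ℝ) < d ^ (2 * H) := Real.rpow_pos_of_pos hd0 _
        have hfinal : c1 ^ (2 * H) * d ^ (2 * H)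
            ≤ (C * d ^ (2 * (α - H))) * d ^ (2 * H) := by
          calc c1 ^ (2 * H) * d ^ (2 * H) ≤ incVar P B t0 p := hVlow
            _ ≤ C * d ^ (2 * α) := hVup
            _ = (C * d ^ (2 * (α - H))) * d ^ (2 * H) := by rw [hsplit]; ring
        have := le_of_mul_le_mul_right hfinal hdH
        linarith
      · rintro ⟨hα0, hαH⟩
        refine ⟨hα0, c2 ^ (2 * H), min ρ0 (1/2), lt_min hρ0 (by norm_num), ?_⟩
        rintro s ⟨hso, hsb⟩ t ⟨hto, htb⟩
        rw [Metric.mem_ball] at hsb htb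
        have hsb' : dist s t0 < ρ0 := hsb.trans_le (min_le_left _ _)
        have htb' : dist t t0 < ρ0 := htb.trans_le (min_le_left _ _)
        have hdlt1 : dist s t ≤ 1 := by
          have h1 : dist s t ≤ dist s t0 + dist t0 t := dist_triangle _ _ _
          have h2 : dist t0 t = dist t t0 := dist_comm _ _
          have h3 : dist s t0 < 1/2 := hsb.trans_le (min_le_right _ _)
          have h4 : dist t t0 < 1/2 := htb.trans_le (min_le_right _ _)
          linarith
        rw [incVar_eq P H hH0 B hB hso hto]
        have h := (hbd s hso hsb' t hto htb').2
        calc (volume (box s ∆ box t)).toReal ^ (2 * H)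
            ≤ (c2 * dist s t) ^ (2 * H) :=
              Real.rpow_le_rpow ENNReal.toReal_nonneg h (by positivity)
          _ = c2 ^ (2 * H) * dist s t ^ (2 * H) := Real.mul_rpow hc2.le dist_nonneg
          _ ≤ c2 ^ (2 * H) * dist s t ^ (2 * α) := by
              rcases eq_or_lt_of_le (dist_nonneg : (0:ℝ) ≤ dist s t) with h0 | h0
              · rw [← h0, Real.zero_rpow (by positivity), Real.zero_rpow (by positivity)]
              · exact mul_le_mul_of_nonneg_left
                  (Real.rpow_le_rpow_of_exponent_ge h0 hdlt1 (by linarith))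
                  (Real.rpow_nonneg hc2.le _)
    unfold detHolder
    rw [hSH]
    exact csSup_Ioc hH0
  · -- detSub = H
    have hSS : {α : ℝ | 0 < α ∧ ∀ M : ℝ, ∃ ρ > (0:ℝ),
        ∀ s ∈ ballIn (orth N) t0 ρ, ∀ t ∈ ballIn (orth N) t0 ρ,
          M * dist s t ^ (2 * α) ≤ incVar P B s t} = Set.Ioi H := by
      ext α
      simp only [Set.mem_setOf_eq, Set.mem_Ioi]
      constructor
      · rintro ⟨hα0, hM⟩
        by_contra hcon
        push_neg at hcon
        obtain ⟨ρ, hρ, hineq⟩ := hM (c2 ^ (2 * H) + 1)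
        set d := min (min ρ ρ0) 1 / 2 with hd
        have hd0 : 0 < d := by
          have : (0:ℝ) < min (min ρ ρ0) 1 := lt_min (lt_min hρ hρ0) one_pos
          positivity
        have hdhalf : d < min (min ρ ρ0) 1 := by
          have : (0:ℝ) < min (min ρ ρ0) 1 := lt_min (lt_min hρ hρ0) one_pos
          rw [hd]; linarith
        have hdρ : d < ρ := hdhalf.trans_le ((min_le_left _ _).trans (min_le_left _ _))
        have hdρ0 : d < ρ0 := hdhalf.trans_le ((min_le_left _ _).trans (min_le_right _ _))
        have hdle1 : d ≤ 1 := (hdhalf.trans_le (min_le_right _ _)).le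
        set p := t0 + EuclideanSpace.single i0 d with hp
        obtain ⟨hpo, hpd⟩ := hpt d hd0
        have hball1 : t0 ∈ ballIn (orth N) t0 ρ :=
          ⟨ht0', by rw [Metric.mem_ball, dist_self]; exact hρ⟩
        have hball2 : p ∈ ballIn (orth N) t0 ρ :=
          ⟨hpo, by rw [Metric.mem_ball, dist_comm, hpd]; exact hdρ⟩
        have hVup : incVar P B t0 p ≤ c2 ^ (2 * H) * d ^ (2 * H) := by
          rw [incVar_eq P H hH0 B hB ht0' hpo]
          have h := (hbd t0 (fun i => (ht0 i).le) (by rwa [dist_self]) p (fun i => hpo i)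
            (by rw [dist_comm, hpd]; exact hdρ0)).2
          rw [hpd] at h
          calc (volume (box t0 ∆ box p)).toReal ^ (2 * H)
              ≤ (c2 * d) ^ (2 * H) :=
                Real.rpow_le_rpow ENNReal.toReal_nonneg h (by positivity)
            _ = c2 ^ (2 * H) * d ^ (2 * H) := Real.mul_rpow hc2.le hd0.le
        have hVlow := hineq t0 hball1 p hball2
        rw [hpd] at hVlow
        have hmono : d ^ (2 * H) ≤ d ^ (2 * α) :=
          Real.rpow_le_rpow_of_exponent_ge hd0 hdle1 (by linarith)
        have hdα : (0:ℝ) < d ^ (2 * α) := Real.rpow_pos_of_pos hd0 _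
        have hfinal : (c2 ^ (2 * H) + 1) * d ^ (2 * α) ≤ c2 ^ (2 * H) * d ^ (2 * α) := by
          calc (c2 ^ (2 * H) + 1) * d ^ (2 * α) ≤ incVar P B t0 p := hVlow
            _ ≤ c2 ^ (2 * H) * d ^ (2 * H) := hVup
            _ ≤ c2 ^ (2 * H) * d ^ (2 * α) :=
                mul_le_mul_of_nonneg_left hmono (Real.rpow_nonneg hc2.le _)
        have := le_of_mul_le_mul_right hfinal hdα
        linarith
      · intro hα
        refine ⟨hH0.trans hα, fun M => ?_⟩
        rcases le_or_gt M 0 with hM | hM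
        · refine ⟨ρ0, hρ0, ?_⟩
          rintro s ⟨hso, -⟩ t ⟨hto, -⟩
          have h1 : M * dist s t ^ (2 * α) ≤ 0 := by
            have := Real.rpow_nonneg (dist_nonneg : (0:ℝ) ≤ dist s t) (2 * α)
            calc M * dist s t ^ (2 * α) ≤ 0 * dist s t ^ (2 * α) :=
                  mul_le_mul_of_nonneg_right hM this
              _ = 0 := zero_mul _
          exact h1.trans (hVnonneg s hso t hto)
        · have hexpos : (0:ℝ) < 2 * (α - H) := by linarith
          have htend : Filter.Tendsto (fun r : ℝ => M * r ^ (2 * (α - H))) (𝓝[>] 0) (𝓝 0) := by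
            have hc : ContinuousAt (fun r : ℝ => r ^ (2 * (α - H))) 0 :=
              Real.continuousAt_rpow_const 0 _ (Or.inr hexpos.le)
            have h00 : (0:ℝ) ^ (2 * (α - H)) = 0 := Real.zero_rpow (ne_of_gt hexpos)
            have h1 : Filter.Tendsto (fun r : ℝ => r ^ (2 * (α - H))) (𝓝[>] (0:ℝ))
                (𝓝 ((0:ℝ) ^ (2 * (α - H)))) := hc.tendsto.mono_left nhdsWithin_le_nhds
            simpa [h00] using h1.const_mul M
          have hc1H : (0:ℝ) < c1 ^ (2 * H) := Real.rpow_pos_of_pos hc1 _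
          have hev : ∀ᶠ r in 𝓝[>] (0:ℝ),
              M * r ^ (2 * (α - H)) < c1 ^ (2 * H) := htend.eventually (gt_mem_nhds hc1H)
          have hev2 : ∀ᶠ r in 𝓝[>] (0:ℝ), r ∈ Set.Ioo 0 ρ0 :=
            Ioo_mem_nhdsGT_of_mem ⟨le_refl 0, hρ0⟩
          obtain ⟨r, hr1, hr2⟩ := (hev.and hev2).exists
          obtain ⟨hr0, hrρ0⟩ := hr2
          refine ⟨r / 2, by positivity, ?_⟩
          rintro s ⟨hso, hsb⟩ t ⟨hto, htb⟩
          rw [Metric.mem_ball] at hsb htb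
          have hsb' : dist s t0 < ρ0 := hsb.trans (by linarith)
          have htb' : dist t t0 < ρ0 := htb.trans (by linarith)
          have hdr : dist s t ≤ r := by
            have h1 : dist s t ≤ dist s t0 + dist t0 t := dist_triangle _ _ _
            have h2 : dist t0 t = dist t t0 := dist_comm _ _
            linarith
          rw [incVar_eq P H hH0 B hB hso hto]
          have h := (hbd s hso hsb' t hto htb').1
          rcases eq_or_lt_of_le (dist_nonneg : (0:ℝ) ≤ dist s t) with h0 | h0
          · have hαpos : (0:ℝ) < α := hH0.trans hα
            rw [← h0, Real.zero_rpow (by positivity), mul_zero]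
            exact Real.rpow_nonneg ENNReal.toReal_nonneg _
          · have hsplit : dist s t ^ (2 * α)
                = dist s t ^ (2 * (α - H)) * dist s t ^ (2 * H) := by
              rw [← Real.rpow_add h0]
              congr 1
              ring
            calc M * dist s t ^ (2 * α)
                = (M * dist s t ^ (2 * (α - H))) * dist s t ^ (2 * H) := by
                  rw [hsplit]; ring
              _ ≤ c1 ^ (2 * H) * dist s t ^ (2 * H) := by
                  refine mul_le_mul_of_nonneg_right ?_ (Real.rpow_nonneg dist_nonneg _)
                  refine le_trans ?_ hr1.le
                  refine mul_le_mul_of_nonneg_left ?_ hM.le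
                  exact Real.rpow_le_rpow dist_nonneg hdr hexpos.le
              _ = (c1 * dist s t) ^ (2 * H) := (Real.mul_rpow hc1.le dist_nonneg).symm
              _ ≤ (volume (box s ∆ box t)).toReal ^ (2 * H) :=
                  Real.rpow_le_rpow (by positivity) h (by positivity)
    unfold detSub
    rw [hSS]
    exact csInf_Ioi


end
end
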